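/- Let σ = (E, E', T, Ξ) be a TTS and ≤ a preorder on E' such that σ and (E', ≤) are strongly compatible, i.e.: (3.1) x' ∈ T(A), x' ≤ y' implies y' ∈ T(A); (3.2) x' ∈ Conver(σ, x), x' ≤ y' implies y' ∈ Conver(σ, x); (3.3) x' ∈ Cauchy(σ), x' ≤ y' implies y' ∈ Cauchy(σ) and x' Ξ y'; and (3.20) for all A, B ⊆ E, T(A ∪ B) ⊆ T_σ(A, A∪B) ∪ T_σ(B, A∪B), where T_σ(A, C) = {x' ∈ T(C) | ∃ y' ∈ T(A), x' ≤ y'}. Then finite unions of σ-closed sets are σ-closed, and finite intersections of σ-open sets are σ-open. -/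

import Mathlib

/-- The set of processes convergent to `x` in the topological type structure given by
`T` and the Cauchy-ness relation `Xi`. -/
def ConverTTS {E E' : Type*} (T : Set E → Set E') (Xi : E' → E' → Prop) (x : E) : Set E' :=
  {x' | ∃ x'0 ∈ T {x}, Xi x' x'0}

/-- The set of Cauchy processes of the topological type structure with relation `Xi`. -/
def CauchyTTS {E' : Type*} (Xi : E' → E' → Prop) : Set E' :=
  {x' | Xi x' x'}

/-- A subset `A ⊆ E` is `σ`-closed if every process based in `A` which converges in `σ`
to some `x ∈ E` has `x ∈ A`. -/
def IsClosedTTS {E E' : Type*} (T : Set E → Set E') (Xi : E' → E' → Prop) (A : Set E) : Prop :=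
  ∀ x' ∈ T A, ∀ x : E, x' ∈ ConverTTS T Xi x → x ∈ A

/-- A subset `A ⊆ E` is `σ`-open if its complement is `σ`-closed. -/
def IsOpenTTS {E E' : Type*} (T : Set E → Set E') (Xi : E' → E' → Prop) (A : Set E) : Prop :=
  IsClosedTTS T Xi Aᶜ

/-- The `σ`-adherence operator (3.19): `T_σ(A, C)` consists of the processes based in `C`
which are refined by some process based in `A`. -/
def TsigmaTTS {E E' : Type*} (T : Set E → Set E') (le : E' → E' → Prop)
    (A C : Set E) : Set E' :=
  {x' ∈ T C | ∃ y' ∈ T A, le x' y'}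

/-- If the TTS `σ = (E, E', T, Ξ)` and the preorder `(E', ≤)` are strongly compatible
(conditions (3.1)-(3.3) and (3.20)), then finite unions of `σ`-closed sets are
`σ`-closed and finite intersections of `σ`-open sets are `σ`-open. -/
theorem tts_strongly_compatible_finite_unions_closed
    {E E' : Type*} (T : Set E → Set E') (Xi : E' → E' → Prop) (le : E' → E' → Prop)
    (hrefl : ∀ x' : E', le x' x')
    (htrans : ∀ x' y' z' : E', le x' y' → le y' z' → le x' z')
    (hTTP1 : ∀ A B : Set E, A.Nonempty → A ⊆ B → (T A).Nonempty ∧ T A ⊆ T B)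
    (hTTP2 : T Set.univ = Set.univ)
    (hT0 : T (∅ : Set E) = ∅)
    (hTTS1 : ∀ (x : E) (x' y' : E'), x' ∈ T {x} → y' ∈ T {x} → Xi x' y')
    (hTTS2 : ∀ x' y' : E', Xi x' y' → Xi y' x')
    (hTTS3 : ∀ x' y' : E', Xi x' y' → Xi x' x')
    (h31 : ∀ (A : Set E) (x' y' : E'), x' ∈ T A → le x' y' → y' ∈ T A)
    (h32 : ∀ (x : E) (x' y' : E'),
      x' ∈ ConverTTS T Xi x → le x' y' → y' ∈ ConverTTS T Xi x)
    (h33 : ∀ x' y' : E', x' ∈ CauchyTTS Xi → le x' y' →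
      y' ∈ CauchyTTS Xi ∧ Xi x' y')
    (h320 : ∀ A B : Set E,
      T (A ∪ B) ⊆ TsigmaTTS T le A (A ∪ B) ∪ TsigmaTTS T le B (A ∪ B)) :
    (∀ S : Set (Set E), S.Finite → (∀ A ∈ S, IsClosedTTS T Xi A) →
        IsClosedTTS T Xi (⋃₀ S)) ∧
    (∀ S : Set (Set E), S.Finite → (∀ A ∈ S, IsOpenTTS T Xi A) →
        IsOpenTTS T Xi (⋂₀ S)) := by
  have hunion : ∀ A B : Set E, IsClosedTTS T Xi A → IsClosedTTS T Xi B →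
      IsClosedTTS T Xi (A ∪ B) := by
    intro A B hA hB x' hx' x hconv
    rcases h320 A B hx' with h | h
    · obtain ⟨-, y', hy', hle⟩ := h
      exact Or.inl (hA y' hy' x (h32 x x' y' hconv hle))
    · obtain ⟨-, y', hy', hle⟩ := h
      exact Or.inr (hB y' hy' x (h32 x x' y' hconv hle))
  have hclosed : ∀ S : Set (Set E), S.Finite → (∀ A ∈ S, IsClosedTTS T Xi A) →
      IsClosedTTS T Xi (⋃₀ S) := by
    intro S hS
    refine Set.Finite.induction_on (motive := fun S _ => (∀ A ∈ S, IsClosedTTS T Xi A) →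
        IsClosedTTS T Xi (⋃₀ S)) S hS ?_ ?_
    · intro _ x' hx'
      rw [Set.sUnion_empty, hT0] at hx'
      exact absurd hx' (Set.notMem_empty x')
    · intro A S hAS hSfin ih hall
      rw [Set.sUnion_insert]
      exact hunion A (⋃₀ S) (hall A (Set.mem_insert A S))
        (ih fun B hB => hall B (Set.mem_insert_of_mem A hB))
  refine ⟨hclosed, fun S hS hall => ?_⟩
  unfold IsOpenTTS
  rw [Set.compl_sInter]
  rw [Set.sUnion_image]
  rw [← Set.sUnion_image]
  exact hclosed _ (hS.image _) (by rintro B ⟨A, hA, rfl⟩; exact hall A hA)
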